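/- Global asymptotic stability of the adoption-free equilibrium (Theorem 1): assume additionally γ_j > 0, θ_j > 0 and γ_j + θ_j < 1 for all j, that W and W̃ are irreducible (for all i, j there exists m ≥ 1 with (W^m)_{ij} > 0, and likewise for W̃), and that λ_k + ξ_k < 1 for some k (so that I − ΛW̃ is invertible); set x* := (I − ΛW̃)^{−1}(I − Λ − Ξ) x⁰. Let x̄ ∈ [0,1]^n and suppose the admissible trajectory (a(t), d(t), x(t)) satisfies x_j(t) ≤ x̄_j for all j and all t ∈ ℕ. If every complex eigenvalue of the nonnegative matrix M̄ := I − Δ + B·diag(x̄)·(I − diag(Ψ(x̄)))·W, where Ψ(x̄)_j := θ_j (1 − x̄_j) / (γ_j x̄_j + θ_j (1 − x̄_j)), has modulus strictly less than 1, then a(t) → 0, d(t) → Ψ(x*), and x(t) → x* as t → ∞, where Ψ(x*)_j := θ_j (1 − x*_j) / (γ_j x*_j + θ_j (1 − x*_j)). -/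

import Mathlib

open Matrix Filter
open scoped ENNReal NNReal

attribute [local instance] Matrix.linftyOpNormedRing Matrix.linftyOpNormedAlgebra


lemma iss_scalar (u ζ : ℕ → ℝ) (ρ : ℝ) (hρ0 : 0 ≤ ρ) (hρ1 : ρ < 1)
    (hu : ∀ t, 0 ≤ u t) (hrec : ∀ t, u (t + 1) ≤ ρ * u t + ζ t)
    (hζ : Tendsto ζ atTop (nhds 0)) : Tendsto u atTop (nhds 0) := by
  rw [Metric.tendsto_atTop]
  intro ε hε
  have hρ' : 0 < 1 - ρ := by linarith
  obtain ⟨N₀, hN₀⟩ := Metric.tendsto_atTop.mp hζ ((1 - ρ) * ε / 4) (by positivity)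
  have hkey : ∀ m, u (N₀ + m) ≤ ρ ^ m * u N₀ + ε / 2 := by
    intro m
    induction m with
    | zero => simp; nlinarith [hu N₀]
    | succ m ih =>
      have h1 : u ((N₀ + m) + 1) ≤ ρ * u (N₀ + m) + ζ (N₀ + m) := hrec (N₀ + m)
      have h2 : |ζ (N₀ + m)| < (1 - ρ) * ε / 4 := by
        simpa [Real.dist_eq] using hN₀ (N₀ + m) (Nat.le_add_right _ _)
      have h2' : ζ (N₀ + m) ≤ (1 - ρ) * ε / 4 := le_trans (le_abs_self _) h2.le
      have heq : N₀ + (m + 1) = (N₀ + m) + 1 := by omega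
      rw [heq, pow_succ]
      nlinarith [pow_nonneg hρ0 m, hu (N₀ + m)]
  have hp : Tendsto (fun m => ρ ^ m * u N₀) atTop (nhds 0) := by
    simpa using (tendsto_pow_atTop_nhds_zero_of_lt_one hρ0 hρ1).mul_const (u N₀)
  obtain ⟨m₀, hm₀⟩ := Metric.tendsto_atTop.mp hp (ε / 4) (by positivity)
  refine ⟨N₀ + m₀, fun t ht => ?_⟩
  obtain ⟨m, hm, rfl⟩ : ∃ m, m₀ ≤ m ∧ t = N₀ + m := ⟨t - N₀, by omega, by omega⟩
  have h3 := hkey m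
  have h4 := hm₀ m hm
  rw [Real.dist_eq, sub_zero] at h4
  have h5 : ρ ^ m * u N₀ < ε / 4 := lt_of_le_of_lt (le_abs_self _) h4
  rw [Real.dist_eq, sub_zero, abs_of_nonneg (hu _)]
  linarith

lemma subseq_combine (M : ℕ) (hM : 0 < M) (u : ℕ → ℝ)
    (h : ∀ r, r < M → Tendsto (fun s => u (s * M + r)) atTop (nhds 0)) :
    Tendsto u atTop (nhds 0) := by
  rw [Metric.tendsto_atTop]
  intro ε hε
  choose N hN using fun r (hr : r < M) => Metric.tendsto_atTop.mp (h r hr) ε hε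
  have : ∃ N', ∀ r (hr : r < M), N r hr ≤ N' := by
    refine ⟨(Finset.range M).sup (fun r => if hr : r < M then N r hr else 0), ?_⟩
    intro r hr
    have := Finset.le_sup (f := fun r => if hr : r < M then N r hr else 0)
      (Finset.mem_range.mpr hr)
    simpa [dif_pos hr] using this
  obtain ⟨N', hN'⟩ := this
  refine ⟨(N' + 1) * M, fun t ht => ?_⟩
  have hr : t % M < M := Nat.mod_lt _ hM
  have hts : t = (t / M) * M + t % M := by
    rw [Nat.mul_comm (t / M) M]
    exact (Nat.div_add_mod t M).symm
  have hs : N' + 1 ≤ t / M := by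
    calc N' + 1 = (N' + 1) * M / M := by rw [Nat.mul_div_cancel _ hM]
    _ ≤ t / M := Nat.div_le_div_right ht
  rw [hts]
  exact hN (t % M) hr (t / M) (le_trans (hN' _ hr) (by omega))

lemma iss_M (M : ℕ) (hM : 0 < M) (u ζ : ℕ → ℝ) (ρ : ℝ) (hρ0 : 0 ≤ ρ) (hρ1 : ρ < 1)
    (hu : ∀ t, 0 ≤ u t) (hrec : ∀ t, u (t + M) ≤ ρ * u t + ζ t)
    (hζ : Tendsto ζ atTop (nhds 0)) : Tendsto u atTop (nhds 0) := by
  apply subseq_combine M hM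
  intro r hr
  apply iss_scalar _ (fun s => ζ (s * M + r)) ρ hρ0 hρ1 (fun s => hu _)
  · intro s
    have heq : (s + 1) * M + r = (s * M + r) + M := by ring
    rw [heq]
    exact hrec _
  · refine hζ.comp (tendsto_atTop_mono (fun s => ?_) tendsto_id)
    calc (id s : ℕ) = s * 1 := by simp
    _ ≤ s * M := Nat.mul_le_mul_left s hM
    _ ≤ s * M + r := Nat.le_add_right _ _

lemma pow_entry_nonneg {n : ℕ} (A : Matrix (Fin n) (Fin n) ℝ) (hA0 : ∀ i j, 0 ≤ A i j) :
    ∀ m i j, 0 ≤ (A ^ m) i j := by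
  intro m
  induction m with
  | zero => intro i j; by_cases h : i = j <;> simp [pow_zero, Matrix.one_apply, h]
  | succ m ih =>
    intro i j
    rw [pow_succ, Matrix.mul_apply]
    exact Finset.sum_nonneg fun k _ => mul_nonneg (ih i k) (hA0 k j)

lemma matrix_iss {n : ℕ} (hn : 1 ≤ n) (A : Matrix (Fin n) (Fin n) ℝ)
    (hA0 : ∀ i j, 0 ≤ A i j)
    (M : ℕ) (hM : 1 ≤ M) (κ : ℝ) (hκ0 : 0 ≤ κ) (hκ1 : κ < 1)
    (hκ : ∀ i, ∑ j, (A ^ M) i j ≤ κ)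
    (v : ℕ → Fin n → ℝ) (hv0 : ∀ t j, 0 ≤ v t j)
    (ζ : ℕ → ℝ) (hζ0 : ∀ t, 0 ≤ ζ t) (hζ : Tendsto ζ atTop (nhds 0))
    (hrec : ∀ t j, v (t + 1) j ≤ (∑ k, A j k * v t k) + ζ t) :
    ∀ j, Tendsto (fun t => v t j) atTop (nhds 0) := by
  haveI : Nonempty (Fin n) := ⟨⟨0, hn⟩⟩
  have hne : (Finset.univ : Finset (Fin n)).Nonempty := Finset.univ_nonempty
  set R : ℝ := ((Finset.univ.sup' hne fun i => ∑ j, A i j) ⊔ 1) with hR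
  have hR1 : (1:ℝ) ≤ R := le_sup_right
  have hR0 : (0:ℝ) ≤ R := le_trans zero_le_one hR1
  have hRrow : ∀ i, ∑ j, A i j ≤ R := fun i =>
    le_trans (Finset.le_sup' (fun i => ∑ j, A i j) (Finset.mem_univ i)) le_sup_left
  have hArow : ∀ m i, ∑ j, (A ^ m) i j ≤ R ^ m := by
    intro m
    induction m with
    | zero => intro i; simp [pow_zero, Matrix.one_apply]
    | succ m ih =>
      intro i
      have : ∑ j, (A ^ (m+1)) i j = ∑ k, A i k * (∑ j, (A ^ m) k j) := by
        simp_rw [pow_succ', Matrix.mul_apply, Finset.mul_sum]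
        rw [Finset.sum_comm]
      rw [this, pow_succ']
      calc ∑ k, A i k * (∑ j, (A ^ m) k j) ≤ ∑ k, A i k * R ^ m := by
            apply Finset.sum_le_sum
            intro k _
            exact mul_le_mul_of_nonneg_left (ih k) (hA0 i k)
      _ = (∑ k, A i k) * R ^ m := by rw [Finset.sum_mul]
      _ ≤ R * R ^ m := mul_le_mul_of_nonneg_right (hRrow i) (pow_nonneg hR0 m)
  -- key step bound
  have hkey : ∀ t m j, v (t + m) j ≤ (∑ k, (A ^ m) j k * v t k)
      + ∑ i ∈ Finset.range m, R ^ i * ζ (t + (m - 1 - i)) := by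
    intro t m
    induction m with
    | zero => intro j; simp [pow_zero, Matrix.one_apply]
    | succ m ih =>
      intro j
      have h1 : v (t + (m + 1)) j ≤ (∑ k, A j k * v (t + m) k) + ζ (t + m) := by
        have := hrec (t + m) j
        rwa [show t + m + 1 = t + (m + 1) by omega] at this
      have h2 : ∑ k, A j k * v (t + m) k ≤
          ∑ k, A j k * ((∑ l, (A ^ m) k l * v t l)
            + ∑ i ∈ Finset.range m, R ^ i * ζ (t + (m - 1 - i))) := by
        apply Finset.sum_le_sum
        intro k _
        exact mul_le_mul_of_nonneg_left (ih k) (hA0 j k)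
      set E := ∑ i ∈ Finset.range m, R ^ i * ζ (t + (m - 1 - i)) with hE
      have hE0 : 0 ≤ E := Finset.sum_nonneg fun i _ =>
        mul_nonneg (pow_nonneg hR0 i) (hζ0 _)
      have h3 : ∑ k, A j k * ((∑ l, (A ^ m) k l * v t l) + E)
          = (∑ k, A j k * (∑ l, (A ^ m) k l * v t l)) + (∑ k, A j k) * E := by
        rw [Finset.sum_mul, ← Finset.sum_add_distrib]
        apply Finset.sum_congr rfl
        intro k _
        ring
      have h4 : ∑ k, A j k * (∑ l, (A ^ m) k l * v t l)
          = ∑ l, (A ^ (m+1)) j l * v t l := by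
        simp_rw [pow_succ', Matrix.mul_apply, Finset.mul_sum, Finset.sum_mul]
        rw [Finset.sum_comm]
        apply Finset.sum_congr rfl
        intro l _
        apply Finset.sum_congr rfl
        intro k _
        ring
      have h5 : (∑ k, A j k) * E ≤ R * E := mul_le_mul_of_nonneg_right (hRrow j) hE0
      have h6 : R * E + ζ (t + m)
          = ∑ i ∈ Finset.range (m+1), R ^ i * ζ (t + (m + 1 - 1 - i)) := by
        rw [Finset.sum_range_succ']
        have hcongr : ∀ i ∈ Finset.range m, R ^ (i+1) * ζ (t + (m + 1 - 1 - (i+1)))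
            = R * (R ^ i * ζ (t + (m - 1 - i))) := by
          intro i hi
          rw [show m + 1 - 1 - (i+1) = m - 1 - i by omega, pow_succ']
          ring
        rw [Finset.sum_congr rfl hcongr, ← Finset.mul_sum, ← hE,
          show m + 1 - 1 - 0 = m by omega]
        ring
      calc v (t + (m + 1)) j ≤ (∑ k, A j k * v (t + m) k) + ζ (t + m) := h1
      _ ≤ (∑ k, A j k * ((∑ l, (A ^ m) k l * v t l) + E)) + ζ (t + m) := by linarith [h2]
      _ = ((∑ l, (A ^ (m+1)) j l * v t l) + (∑ k, A j k) * E) + ζ (t + m) := by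
          rw [h3, h4]
      _ ≤ (∑ l, (A ^ (m+1)) j l * v t l) + (R * E + ζ (t + m)) := by linarith [h5]
      _ = (∑ l, (A ^ (m+1)) j l * v t l)
          + ∑ i ∈ Finset.range (m+1), R ^ i * ζ (t + (m + 1 - 1 - i)) := by rw [h6]
  -- scalarize
  set u : ℕ → ℝ := fun t => Finset.univ.sup' hne (fun j => v t j) with hu
  have huv : ∀ t j, v t j ≤ u t := fun t j => Finset.le_sup' _ (Finset.mem_univ j)
  have hu0 : ∀ t, 0 ≤ u t := fun t => le_trans (hv0 t ⟨0, hn⟩) (huv t _)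
  set ζ' : ℕ → ℝ := fun t => ∑ i ∈ Finset.range M, R ^ i * ζ (t + (M - 1 - i)) with hζ'
  have hζ'0 : ∀ t, 0 ≤ ζ' t := fun t => Finset.sum_nonneg fun i _ =>
    mul_nonneg (pow_nonneg hR0 i) (hζ0 _)
  have hζ't : Tendsto ζ' atTop (nhds 0) := by
    rw [hζ']
    have : Tendsto (fun t => ∑ i ∈ Finset.range M, R ^ i * ζ (t + (M - 1 - i)))
        atTop (nhds (∑ i ∈ Finset.range M, (0:ℝ))) := by
      apply tendsto_finset_sum
      intro i _
      have hshift : Tendsto (fun t : ℕ => t + (M - 1 - i)) atTop atTop :=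
        tendsto_atTop_mono (fun t => Nat.le_add_right t _) tendsto_id
      have := (hζ.comp hshift).const_mul (R ^ i)
      simpa using this
    simpa using this
  have hurec : ∀ t, u (t + M) ≤ κ * u t + ζ' t := by
    intro t
    apply Finset.sup'_le
    intro j _
    calc v (t + M) j ≤ (∑ k, (A ^ M) j k * v t k) + ζ' t := hkey t M j
    _ ≤ (∑ k, (A ^ M) j k * u t) + ζ' t := by
        apply add_le_add_left
        apply Finset.sum_le_sum
        intro k _
        exact mul_le_mul_of_nonneg_left (huv t k) (pow_entry_nonneg A hA0 M j k)
    _ = (∑ k, (A ^ M) j k) * u t + ζ' t := by rw [Finset.sum_mul]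
    _ ≤ κ * u t + ζ' t := by
        apply add_le_add_left
        exact mul_le_mul_of_nonneg_right (hκ j) (hu0 t)
  have hut : Tendsto u atTop (nhds 0) :=
    iss_M M hM u ζ' κ hκ0 hκ1 hu0 hurec hζ't
  intro j
  exact squeeze_zero (fun t => hv0 t j) (fun t => huv t j) hut

lemma eval_charpoly' {n : ℕ} (A : Matrix (Fin n) (Fin n) ℂ) (μ : ℂ) :
    A.charpoly.eval μ = (Matrix.diagonal (fun _ => μ) - A).det := by
  rw [Matrix.charpoly, ← Polynomial.coe_evalRingHom, RingHom.map_det]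
  congr 1
  ext i j
  by_cases h : i = j
  · subst h; simp [charmatrix_apply_eq]
  · simp [charmatrix_apply_ne _ _ _ h, Matrix.diagonal_apply_ne _ h]

lemma exists_pow_rowsum_lt (n : ℕ) (hn : 1 ≤ n) (A : Matrix (Fin n) (Fin n) ℝ)
    (heig : ∀ μ : ℂ, ((A.map (fun r : ℝ => (r : ℂ))).charpoly).IsRoot μ → ‖μ‖ < 1) :
    ∃ M : ℕ, 1 ≤ M ∧ ∃ κ : ℝ, 0 ≤ κ ∧ κ < 1 ∧ ∀ i, ∑ j, |(A ^ M) i j| ≤ κ := by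
  haveI : CompleteSpace (Matrix (Fin n) (Fin n) ℂ) :=
    (by infer_instance : CompleteSpace ((Fin n) → (Fin n) → ℂ))
  haveI : Nonempty (Fin n) := ⟨⟨0, hn⟩⟩
  set Ac : Matrix (Fin n) (Fin n) ℂ := A.map (fun r : ℝ => (r : ℂ)) with hAc
  -- all spectrum elements have norm < 1
  have hspec : ∀ μ ∈ spectrum ℂ Ac, ‖μ‖₊ < 1 := by
    intro μ hμ
    rw [spectrum.mem_iff] at hμ
    have hdet : (Matrix.diagonal (fun _ => μ) - Ac).det = 0 := by
      by_contra hne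
      have halg : (algebraMap ℂ (Matrix (Fin n) (Fin n) ℂ)) μ = Matrix.diagonal (fun _ => μ) := by
        rw [Matrix.algebraMap_eq_diagonal]; rfl
      exact hμ (halg ▸ (Matrix.isUnit_iff_isUnit_det _).mpr (isUnit_iff_ne_zero.mpr hne))
    have := heig μ (by rwa [Polynomial.IsRoot, eval_charpoly'])
    simpa [← NNReal.coe_lt_coe, coe_nnnorm] using this
  have hrad : spectralRadius ℂ Ac < 1 := by
    have := spectrum.spectralRadius_lt_of_forall_lt Ac hspec
    simpa using this
  have hG := spectrum.pow_nnnorm_pow_one_div_tendsto_nhds_spectralRadius Ac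
  have hev : ∀ᶠ k : ℕ in atTop, ((‖Ac ^ k‖₊ : ℝ≥0∞) ^ (1 / (k:ℝ)) < 1) := by
    have h1 : spectralRadius ℂ Ac < (1:ℝ≥0∞) := by simpa using hrad
    exact hG.eventually_lt_const h1
  obtain ⟨M, hM1, hMlt⟩ : ∃ M : ℕ, 1 ≤ M ∧ (‖Ac ^ M‖₊ : ℝ≥0∞) ^ (1 / (M:ℝ)) < 1 := by
    obtain ⟨M, h1, h2⟩ := ((eventually_ge_atTop 1).and hev).exists
    exact ⟨M, h1, h2⟩
  have hnormlt : ‖Ac ^ M‖₊ < 1 := by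
    by_contra hge
    push_neg at hge
    have : (1:ℝ≥0∞) ≤ (‖Ac ^ M‖₊ : ℝ≥0∞) ^ (1 / (M:ℝ)) := by
      calc (1:ℝ≥0∞) = 1 ^ (1 / (M:ℝ)) := (ENNReal.one_rpow _).symm
      _ ≤ (‖Ac ^ M‖₊ : ℝ≥0∞) ^ (1 / (M:ℝ)) := by
          apply ENNReal.rpow_le_rpow (by exact_mod_cast hge)
          positivity
    exact absurd hMlt (not_lt.mpr this)
  refine ⟨M, hM1, ‖Ac ^ M‖, (norm_nonneg _), ?_, ?_⟩
  · exact_mod_cast hnormlt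
  · intro i
    have hpow : Ac ^ M = (A ^ M).map (fun r : ℝ => (r : ℂ)) := by
      have : Ac = (Complex.ofRealHom.mapMatrix : Matrix (Fin n) (Fin n) ℝ →+* _) A := rfl
      rw [this, ← map_pow]; rfl
    have hrow : ∑ j, ‖(Ac ^ M) i j‖₊ ≤ ‖Ac ^ M‖₊ := by
      rw [Matrix.linfty_opNNNorm_def]
      exact Finset.le_sup (f := fun i => ∑ j, ‖(Ac ^ M) i j‖₊) (Finset.mem_univ i)
    have : (∑ j, ‖(Ac ^ M) i j‖₊ : ℝ) ≤ ‖Ac ^ M‖ := by exact_mod_cast hrow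
    refine le_trans (le_of_eq ?_) this
    push_cast
    apply Finset.sum_congr rfl
    intro j _
    rw [hpow]
    simp [Matrix.map_apply, Real.norm_eq_abs]

lemma substoch_contract {n : ℕ} (hn : 1 ≤ n) (lam : Fin n → ℝ)
    (Wt : Matrix (Fin n) (Fin n) ℝ)
    (hlam0 : ∀ j, 0 ≤ lam j) (hlam1 : ∀ j, lam j ≤ 1)
    (hWt0 : ∀ i j, 0 ≤ Wt i j) (hWt1 : ∀ i, ∑ j, Wt i j = 1)
    (hirr : ∀ i j, ∃ m, 1 ≤ m ∧ 0 < (Wt ^ m) i j)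
    (k0 : Fin n) (hk0 : lam k0 < 1) :
    ∃ M, 1 ≤ M ∧ ∃ κ, 0 ≤ κ ∧ κ < 1 ∧
      ∀ i, ∑ j, ((Matrix.diagonal lam * Wt) ^ M) i j ≤ κ := by
  haveI : Nonempty (Fin n) := ⟨⟨0, hn⟩⟩
  have hne : (Finset.univ : Finset (Fin n)).Nonempty := Finset.univ_nonempty
  set T : Matrix (Fin n) (Fin n) ℝ := Matrix.diagonal lam * Wt with hTdef
  have hT : ∀ i j, T i j = lam i * Wt i j := by
    intro i j
    rw [hTdef, Matrix.diagonal_mul]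
  have hT0 : ∀ i j, 0 ≤ T i j := fun i j => by
    rw [hT]; exact mul_nonneg (hlam0 i) (hWt0 i j)
  set p : ℕ → Fin n → ℝ := fun m i => ∑ j, (T ^ m) i j with hp
  have hp0 : ∀ m i, 0 ≤ p m i := fun m i =>
    Finset.sum_nonneg fun j _ => pow_entry_nonneg T hT0 m i j
  have hpzero : ∀ i, p 0 i = 1 := by
    intro i; simp [hp, Matrix.one_apply]
  have hpsucc : ∀ m i, p (m + 1) i = ∑ k, T i k * p m k := by
    intro m i
    simp only [hp]
    simp_rw [pow_succ', Matrix.mul_apply, Finset.mul_sum]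
    rw [Finset.sum_comm]
  have hp1 : ∀ m i, p m i ≤ 1 := by
    intro m
    induction m with
    | zero => intro i; rw [hpzero]
    | succ m ih =>
      intro i
      rw [hpsucc]
      calc ∑ k, T i k * p m k ≤ ∑ k, T i k * 1 := by
            apply Finset.sum_le_sum
            intro k _
            exact mul_le_mul_of_nonneg_left (ih k) (hT0 i k)
      _ = lam i * ∑ k, Wt i k := by
          simp_rw [mul_one, hT]
          rw [Finset.mul_sum]
      _ = lam i := by rw [hWt1 i, mul_one]
      _ ≤ 1 := hlam1 i
  have hpmono : ∀ m i, p (m + 1) i ≤ p m i := by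
    intro m
    induction m with
    | zero => intro i; rw [hpzero]; exact hp1 1 i
    | succ m ih =>
      intro i
      rw [hpsucc, hpsucc]
      apply Finset.sum_le_sum
      intro k _
      exact mul_le_mul_of_nonneg_left (ih k) (hT0 i k)
  have hpanti : ∀ i, Antitone (fun m => p m i) :=
    fun i => antitone_nat_of_succ_le (fun m => hpmono m i)
  have hlemA : ∀ m i, p (m + 1) i = 1 → lam i = 1 ∧ ∀ k, 0 < Wt i k → p m k = 1 := by
    intro m i hpi
    have hS : p (m + 1) i = lam i * ∑ k, Wt i k * p m k := by
      rw [hpsucc, Finset.mul_sum]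
      apply Finset.sum_congr rfl
      intro k _
      rw [hT]; ring
    set S := ∑ k, Wt i k * p m k with hSdef
    have hS1 : S ≤ 1 := by
      calc S ≤ ∑ k, Wt i k * 1 := Finset.sum_le_sum fun k _ =>
            mul_le_mul_of_nonneg_left (hp1 m k) (hWt0 i k)
      _ = 1 := by simp [hWt1 i]
    have hS0 : 0 ≤ S := Finset.sum_nonneg fun k _ => mul_nonneg (hWt0 i k) (hp0 m k)
    have heq : 1 = lam i * S := by rw [← hpi, hS]
    have hlami : lam i = 1 := by nlinarith [hlam1 i, hlam0 i]
    have hSeq : S = 1 := by rw [hlami] at heq; linarith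
    refine ⟨hlami, ?_⟩
    have hzero : ∑ k, Wt i k * (1 - p m k) = 0 := by
      have : ∑ k, Wt i k * (1 - p m k) = (∑ k, Wt i k) - S := by
        rw [hSdef, ← Finset.sum_sub_distrib]
        apply Finset.sum_congr rfl
        intro k _
        ring
      rw [this, hWt1 i, hSeq]
      ring
    intro k hk
    have hterm := (Finset.sum_eq_zero_iff_of_nonneg
      (fun k _ => mul_nonneg (hWt0 i k) (by linarith [hp1 m k]))).mp hzero k (Finset.mem_univ k)
    rcases mul_eq_zero.mp hterm with h | h
    · exact absurd h (ne_of_gt hk)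
    · linarith
  have hlemB : ∀ m i j, 0 < (Wt ^ m) i j → p (m + 1) i = 1 → p 1 j = 1 := by
    intro m
    induction m with
    | zero =>
      intro i j h1 h2
      have : i = j := by
        by_contra hij
        rw [pow_zero, Matrix.one_apply_ne hij] at h1
        exact lt_irrefl 0 h1
      rwa [← this]
    | succ m ih =>
      intro i j h1 h2
      rw [pow_succ', Matrix.mul_apply] at h1
      have hex : ∃ k, 0 < Wt i k * (Wt ^ m) k j := by
        by_contra hc
        push_neg at hc
        have : ∑ k, Wt i k * (Wt ^ m) k j ≤ 0 := Finset.sum_nonpos fun k _ => hc k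
        linarith
      obtain ⟨k, hk⟩ := hex
      have hk1 : 0 < Wt i k := by
        by_contra hc
        push_neg at hc
        have : Wt i k = 0 := le_antisymm hc (hWt0 i k)
        rw [this, zero_mul] at hk
        exact lt_irrefl 0 hk
      have hk2 : 0 < (Wt ^ m) k j := by
        by_contra hc
        push_neg at hc
        have : (Wt ^ m) k j = 0 := le_antisymm hc (pow_entry_nonneg Wt hWt0 m k j)
        rw [this, mul_zero] at hk
        exact lt_irrefl 0 hk
      obtain ⟨-, hforall⟩ := hlemA (m + 1) i h2
      exact ih k j hk2 (hforall k hk1)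
  have hp1lam : ∀ j, p 1 j = lam j := by
    intro j
    rw [hpsucc]
    calc ∑ k, T j k * p 0 k = ∑ k, lam j * Wt j k := by
          apply Finset.sum_congr rfl
          intro k _
          rw [hpzero, hT]; ring
    _ = lam j := by rw [← Finset.mul_sum, hWt1 j, mul_one]
  choose m hm1 hmpos using fun i => hirr i k0
  set M : ℕ := Finset.univ.sup m + 1 with hMdef
  have hM1 : 1 ≤ M := by omega
  have hplt : ∀ i, p M i < 1 := by
    intro i
    have hle : m i + 1 ≤ M := by
      have := Finset.le_sup (f := m) (Finset.mem_univ i)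
      omega
    have h1 : p M i ≤ p (m i + 1) i := hpanti i hle
    have h2 : p (m i + 1) i < 1 := by
      rcases lt_or_eq_of_le (hp1 (m i + 1) i) with h | h
      · exact h
      · exfalso
        have := hlemB (m i) i k0 (hmpos i) h
        rw [hp1lam] at this
        linarith
    linarith
  refine ⟨M, hM1, Finset.univ.sup' hne (fun i => p M i), ?_, ?_, ?_⟩
  · exact le_trans (hp0 M ⟨0, hn⟩) (Finset.le_sup' _ (Finset.mem_univ _))
  · exact (Finset.sup'_lt_iff hne).mpr fun i _ => hplt i
  · intro i
    exact Finset.le_sup' (fun i => p M i) (Finset.mem_univ i)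


lemma one_sub_mulVec {n : ℕ} (T : Matrix (Fin n) (Fin n) ℝ) (v : Fin n → ℝ) (j : Fin n) :
    ((1 - T) *ᵥ v) j = v j - ∑ k, T j k * v k := by
  simp only [Matrix.mulVec, dotProduct, Matrix.sub_apply, Matrix.one_apply, sub_mul,
    ite_mul, one_mul, zero_mul]
  rw [Finset.sum_sub_distrib, Finset.sum_ite_eq, if_pos (Finset.mem_univ j)]

lemma sub_diag_mulVec {n : ℕ} (lam ξ : Fin n → ℝ) (v : Fin n → ℝ) (j : Fin n) :
    ((1 - Matrix.diagonal lam - Matrix.diagonal ξ) *ᵥ v) j = (1 - lam j - ξ j) * v j := by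
  simp only [Matrix.mulVec, dotProduct, Matrix.sub_apply, Matrix.one_apply,
    Matrix.diagonal_apply, sub_mul, ite_mul, one_mul, zero_mul]
  rw [Finset.sum_sub_distrib, Finset.sum_sub_distrib, Finset.sum_ite_eq,
    if_pos (Finset.mem_univ j), Finset.sum_ite_eq, Finset.sum_ite_eq,
    if_pos (Finset.mem_univ j), if_pos (Finset.mem_univ j)]

lemma pow_fixed {n : ℕ} (T : Matrix (Fin n) (Fin n) ℝ) (v : Fin n → ℝ)
    (hv : ∀ j, ∑ k, T j k * v k = v j) : ∀ m j, ∑ k, (T ^ m) j k * v k = v j := by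
  intro m
  induction m with
  | zero =>
    intro j
    simp only [pow_zero, Matrix.one_apply, ite_mul, one_mul, zero_mul]
    rw [Finset.sum_ite_eq, if_pos (Finset.mem_univ j)]
  | succ m ih =>
    intro j
    have h1 : ∑ k, (T ^ (m + 1)) j k * v k = ∑ l, T j l * (∑ k, (T ^ m) l k * v k) := by
      simp_rw [pow_succ', Matrix.mul_apply, Finset.sum_mul, Finset.mul_sum]
      rw [Finset.sum_comm]
      apply Finset.sum_congr rfl
      intro l _
      apply Finset.sum_congr rfl
      intro k _
      ring
    rw [h1]
    calc ∑ l, T j l * (∑ k, (T ^ m) l k * v k) = ∑ l, T j l * v l :=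
          Finset.sum_congr rfl fun l _ => by rw [ih l]
    _ = v j := hv j

set_option maxHeartbeats 1000000 in
/-- Global asymptotic stability of the adoption-free equilibrium
(Theorem 1). -/
theorem adoption_free_equilibrium_GAS
    (n : ℕ) (hn : 1 ≤ n)
    (β γ θ δ : Fin n → ℝ)
    (hβ : ∀ j, β j ∈ Set.Icc (0 : ℝ) 1) (hγ : ∀ j, γ j ∈ Set.Icc (0 : ℝ) 1)
    (hθ : ∀ j, θ j ∈ Set.Icc (0 : ℝ) 1) (hδ : ∀ j, δ j ∈ Set.Icc (0 : ℝ) 1)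
    (hγpos : ∀ j, 0 < γ j) (hθpos : ∀ j, 0 < θ j) (hγθ : ∀ j, γ j + θ j < 1)
    (W Wt : Matrix (Fin n) (Fin n) ℝ)
    (hW0 : ∀ j k, 0 ≤ W j k) (hW1 : ∀ j, ∑ k, W j k = 1)
    (hWt0 : ∀ j k, 0 ≤ Wt j k) (hWt1 : ∀ j, ∑ k, Wt j k = 1)
    (hWirr : ∀ i j, ∃ m, 1 ≤ m ∧ 0 < (W ^ m) i j)
    (hWtirr : ∀ i j, ∃ m, 1 ≤ m ∧ 0 < (Wt ^ m) i j)
    (lam ξ : Fin n → ℝ)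
    (hlam : ∀ j, 0 ≤ lam j) (hξ : ∀ j, 0 ≤ ξ j)
    (hlamξ : ∀ j, lam j + ξ j ≤ 1)
    (hstub : ∃ k, lam k + ξ k < 1)
    (x0 : Fin n → ℝ) (hx0 : ∀ j, x0 j ∈ Set.Icc (0 : ℝ) 1)
    (xstar : Fin n → ℝ)
    (hxstar : xstar =
        ((1 - Matrix.diagonal lam * Wt)⁻¹
          * (1 - Matrix.diagonal lam - Matrix.diagonal ξ)) *ᵥ x0)
    (Psistar : Fin n → ℝ)
    (hPsistar : ∀ j, Psistar j =
        θ j * (1 - xstar j) / (γ j * xstar j + θ j * (1 - xstar j)))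
    (xbar : Fin n → ℝ) (hxbar : ∀ j, xbar j ∈ Set.Icc (0 : ℝ) 1)
    (Psibar : Fin n → ℝ)
    (hPsibar : ∀ j, Psibar j =
        θ j * (1 - xbar j) / (γ j * xbar j + θ j * (1 - xbar j)))
    (Mbar : Matrix (Fin n) (Fin n) ℝ)
    (hMbar : Mbar = 1 - Matrix.diagonal δ
        + Matrix.diagonal β * Matrix.diagonal xbar
          * (1 - Matrix.diagonal Psibar) * W)
    (heig : ∀ μ : ℂ, (Mbar.map (fun r : ℝ => (r : ℂ))).charpoly.IsRoot μ →
        ‖μ‖ < 1)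
    -- an admissible trajectory whose opinions stay below `xbar`
    (a d x : ℕ → Fin n → ℝ)
    (ha0 : ∀ j, a 0 j ∈ Set.Icc (0 : ℝ) 1) (hd0 : ∀ j, d 0 j ∈ Set.Icc (0 : ℝ) 1)
    (had0 : ∀ j, a 0 j + d 0 j ≤ 1) (hx00 : ∀ j, x 0 j ∈ Set.Icc (0 : ℝ) 1)
    (hrec_a : ∀ t j, a (t + 1) j = a t j
        + β j * x t j * (1 - a t j - d t j) * (∑ k, W j k * a t k) - δ j * a t j)
    (hrec_d : ∀ t j, d (t + 1) j = d t j - γ j * x t j * d t j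
        + θ j * (1 - x t j) * (1 - a t j - d t j) + δ j * a t j)
    (hrec_x : ∀ t j, x (t + 1) j = (1 - lam j - ξ j) * x0 j
        + lam j * (∑ k, Wt j k * x t k) + ξ j * (∑ k, W j k * a t k))
    (hbound : ∀ t j, x t j ≤ xbar j) :
    Tendsto a atTop (nhds 0) ∧ Tendsto d atTop (nhds Psistar) ∧
      Tendsto x atTop (nhds xstar) := by
  haveI : Nonempty (Fin n) := ⟨⟨0, hn⟩⟩
  have hne : (Finset.univ : Finset (Fin n)).Nonempty := Finset.univ_nonempty
  -- ## Invariance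
  have inv : ∀ t, (∀ j, 0 ≤ a t j) ∧ (∀ j, 0 ≤ d t j) ∧ (∀ j, a t j + d t j ≤ 1)
      ∧ (∀ j, 0 ≤ x t j) ∧ (∀ j, x t j ≤ 1) := by
    intro t
    induction t with
    | zero =>
      exact ⟨fun j => (ha0 j).1, fun j => (hd0 j).1, had0,
        fun j => (hx00 j).1, fun j => (hx00 j).2⟩
    | succ t ih =>
      obtain ⟨ia, id', iad, ix0, ix1⟩ := ih
      have hWa0 : ∀ j, 0 ≤ ∑ k, W j k * a t k := fun j =>
        Finset.sum_nonneg fun k _ => mul_nonneg (hW0 j k) (ia k)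
      have hWa1 : ∀ j, ∑ k, W j k * a t k ≤ 1 := by
        intro j
        calc ∑ k, W j k * a t k ≤ ∑ k, W j k * 1 := Finset.sum_le_sum fun k _ =>
              mul_le_mul_of_nonneg_left (by nlinarith [iad k, id' k]) (hW0 j k)
        _ = 1 := by simp [hW1 j]
      have hWx0 : ∀ j, 0 ≤ ∑ k, Wt j k * x t k := fun j =>
        Finset.sum_nonneg fun k _ => mul_nonneg (hWt0 j k) (ix0 k)
      have hWx1 : ∀ j, ∑ k, Wt j k * x t k ≤ 1 := by
        intro j
        calc ∑ k, Wt j k * x t k ≤ ∑ k, Wt j k * 1 := Finset.sum_le_sum fun k _ =>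
              mul_le_mul_of_nonneg_left (ix1 k) (hWt0 j k)
        _ = 1 := by simp [hWt1 j]
      refine ⟨?_, ?_, ?_, ?_, ?_⟩
      · intro j
        rw [hrec_a]
        have hs : 0 ≤ 1 - a t j - d t j := by linarith [iad j]
        nlinarith [mul_nonneg (mul_nonneg (mul_nonneg (hβ j).1 (ix0 j)) hs) (hWa0 j),
          ia j, (hδ j).1, (hδ j).2]
      · intro j
        rw [hrec_d]
        have hs : 0 ≤ 1 - a t j - d t j := by linarith [iad j]
        have hgx : γ j * x t j ≤ 1 :=
          mul_le_one₀ (hγ j).2 (ix0 j) (ix1 j)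
        nlinarith [mul_nonneg (mul_nonneg (hθ j).1 (by linarith [ix1 j] : (0:ℝ) ≤ 1 - x t j)) hs,
          mul_nonneg (hδ j).1 (ia j), id' j, mul_nonneg (ix0 j) (id' j),
          mul_nonneg (mul_nonneg (hγ j).1 (ix0 j)) (id' j)]
      · intro j
        rw [hrec_a, hrec_d]
        have hs : 0 ≤ 1 - a t j - d t j := by linarith [iad j]
        have h1 : β j * x t j * (∑ k, W j k * a t k) ≤ x t j := by
          have h1a : β j * x t j ≤ x t j := mul_le_of_le_one_left (ix0 j) (hβ j).2
          have h1b : β j * x t j * (∑ k, W j k * a t k) ≤ β j * x t j :=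
            mul_le_of_le_one_right (mul_nonneg (hβ j).1 (ix0 j)) (hWa1 j)
          linarith
        have h2 : θ j * (1 - x t j) ≤ 1 - x t j :=
          mul_le_of_le_one_left (by linarith [ix1 j]) (hθ j).2
        nlinarith [mul_nonneg (mul_nonneg (hγ j).1 (ix0 j)) (id' j), hs,
          mul_nonneg hs (by linarith [h1, h2] : 0 ≤ 1 - β j * x t j * (∑ k, W j k * a t k) - θ j * (1 - x t j))]
      · intro j
        rw [hrec_x]
        have h1 : 0 ≤ 1 - lam j - ξ j := by linarith [hlamξ j]
        nlinarith [(hx0 j).1, mul_nonneg (hlam j) (hWx0 j), mul_nonneg (hξ j) (hWa0 j),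
          mul_nonneg h1 (hx0 j).1]
      · intro j
        rw [hrec_x]
        have h1 : 0 ≤ 1 - lam j - ξ j := by linarith [hlamξ j]
        nlinarith [(hx0 j).2, mul_le_mul_of_nonneg_left (hWx1 j) (hlam j),
          mul_le_mul_of_nonneg_left (hWa1 j) (hξ j),
          mul_le_mul_of_nonneg_left (hx0 j).2 h1]
  have Ha : ∀ t j, 0 ≤ a t j := fun t => (inv t).1
  have Hd : ∀ t j, 0 ≤ d t j := fun t => (inv t).2.1
  have Had : ∀ t j, a t j + d t j ≤ 1 := fun t => (inv t).2.2.1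
  have Hxl : ∀ t j, 0 ≤ x t j := fun t => (inv t).2.2.2.1
  have Hxu : ∀ t j, x t j ≤ 1 := fun t => (inv t).2.2.2.2
  have HWa0 : ∀ t j, 0 ≤ ∑ k, W j k * a t k := fun t j =>
    Finset.sum_nonneg fun k _ => mul_nonneg (hW0 j k) (Ha t k)
  have HWa1 : ∀ t j, ∑ k, W j k * a t k ≤ 1 := by
    intro t j
    calc ∑ k, W j k * a t k ≤ ∑ k, W j k * 1 := Finset.sum_le_sum fun k _ =>
          mul_le_mul_of_nonneg_left (by linarith [Had t k, Hd t k]) (hW0 j k)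
    _ = 1 := by simp [hW1 j]
  -- ## The quantity cb = gamma*xbar + theta*(1-xbar)
  set cb : Fin n → ℝ := fun j => γ j * xbar j + θ j * (1 - xbar j) with hcb
  have hcb_pos : ∀ j, 0 < cb j := by
    intro j
    simp only [hcb]
    have h0 := (hxbar j).1
    have h1 := (hxbar j).2
    rcases le_total (γ j) (θ j) with h | h
    · have := mul_le_mul_of_nonneg_right h (by linarith : (0:ℝ) ≤ 1 - xbar j)
      nlinarith [hγpos j, mul_nonneg (hγpos j).le h0]
    · have := mul_le_mul_of_nonneg_right h h0
      nlinarith [hθpos j, mul_nonneg (hθpos j).le (by linarith : (0:ℝ) ≤ 1 - xbar j)]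
  have hcb_le1 : ∀ j, cb j ≤ 1 := by
    intro j
    simp only [hcb]
    have h0 := (hxbar j).1
    have h1 := (hxbar j).2
    have e1 : γ j * xbar j ≤ xbar j := mul_le_of_le_one_left h0 (hγ j).2
    have e2 : θ j * (1 - xbar j) ≤ 1 - xbar j :=
      mul_le_of_le_one_left (by linarith) (hθ j).2
    linarith
  have hPsi_id : ∀ j, Psibar j * cb j = θ j * (1 - xbar j) := by
    intro j
    rw [hPsibar j]
    simp only [hcb]
    exact div_mul_cancel₀ _ (by have := hcb_pos j; simp only [hcb] at this; linarith)
  have hPsi0 : ∀ j, 0 ≤ Psibar j := by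
    intro j
    rw [hPsibar j]
    have hpos := hcb_pos j
    simp only [hcb] at hpos
    exact div_nonneg (mul_nonneg (hθ j).1 (by linarith [(hxbar j).2])) hpos.le
  have hPsi1 : ∀ j, Psibar j ≤ 1 := by
    intro j
    rw [hPsibar j]
    have hpos := hcb_pos j
    simp only [hcb] at hpos
    rw [div_le_one hpos]
    nlinarith [mul_nonneg (hγ j).1 (hxbar j).1]
  set q : ℝ := Finset.univ.sup' hne (fun j => 1 - cb j) with hq
  have hqj : ∀ j, 1 - cb j ≤ q := by
    intro j
    rw [hq]
    exact Finset.le_sup' (fun j => 1 - cb j) (Finset.mem_univ j)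
  have hq0 : 0 ≤ q := le_trans (by linarith [hcb_le1 ⟨0, hn⟩]) (hqj ⟨0, hn⟩)
  have hq1 : q < 1 := by
    rw [hq]
    exact (Finset.sup'_lt_iff hne).mpr fun j _ => by linarith [hcb_pos j]
  -- ## The g-bound : d stays asymptotically above Psibar * (1 - a)
  have hg : ∀ j t, Psibar j * (1 - a t j) - d t j ≤ (1 - cb j) ^ t := by
    intro j t
    induction t with
    | zero =>
      simp only [pow_zero]
      nlinarith [hPsi1 j, hPsi0 j, Ha 0 j, Hd 0 j, mul_nonneg (hPsi0 j) (Ha 0 j)]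
    | succ t ih =>
      have hs : 0 ≤ 1 - a t j - d t j := by linarith [Had t j]
      have hxx : 0 ≤ xbar j - x t j := by linarith [hbound t j]
      have e3 : θ j * (1 - xbar j) = cb j * Psibar j := by rw [← hPsi_id j]; ring
      have hd' : (1 - cb j) * d t j + cb j * (Psibar j * (1 - a t j)) + δ j * a t j
          ≤ d (t+1) j := by
        rw [hrec_d]
        have e1 : 0 ≤ γ j * d t j * (xbar j - x t j) :=
          mul_nonneg (mul_nonneg (hγ j).1 (Hd t j)) hxx
        have e2 : 0 ≤ θ j * (1 - a t j - d t j) * (xbar j - x t j) :=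
          mul_nonneg (mul_nonneg (hθ j).1 hs) hxx
        have hcbx : cb j = γ j * xbar j + θ j * (1 - xbar j) := by rw [hcb]
        have e4 : cb j * Psibar j * a t j = θ j * (1 - xbar j) * a t j := by rw [e3]
        have e5 : cb j * d t j = γ j * xbar j * d t j + θ j * (1 - xbar j) * d t j := by
          rw [hcbx]; ring
        nlinarith [e1, e2, e3, e4, e5]
      have ha' : (1 - δ j) * a t j ≤ a (t+1) j := by
        rw [hrec_a]
        nlinarith [mul_nonneg (mul_nonneg (mul_nonneg (hβ j).1 (Hxl t j)) hs) (HWa0 t j)]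
      have h1 : Psibar j * (1 - a (t+1) j) ≤ Psibar j * (1 - (1 - δ j) * a t j) :=
        mul_le_mul_of_nonneg_left (by linarith) (hPsi0 j)
      have h2 : (1 - cb j) * (Psibar j * (1 - a t j) - d t j) ≤ (1 - cb j) * (1 - cb j) ^ t :=
        mul_le_mul_of_nonneg_left ih (by linarith [hcb_le1 j])
      have h3 : 0 ≤ δ j * a t j * (1 - Psibar j) :=
        mul_nonneg (mul_nonneg (hδ j).1 (Ha t j)) (by linarith [hPsi1 j])
      rw [pow_succ']
      nlinarith [h1, h2, h3, hd']
  -- ## Entries of Mbar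
  have hMdiag : Matrix.diagonal β * Matrix.diagonal xbar * (1 - Matrix.diagonal Psibar)
      = Matrix.diagonal (fun j => β j * xbar j * (1 - Psibar j)) := by
    rw [Matrix.diagonal_mul_diagonal, Matrix.mul_sub, Matrix.mul_one,
      Matrix.diagonal_mul_diagonal, Matrix.diagonal_sub]
    exact congrArg Matrix.diagonal (funext fun j => by ring)
  have hMentry : ∀ j k, Mbar j k
      = (if j = k then 1 - δ j else 0) + β j * xbar j * (1 - Psibar j) * W j k := by
    intro j k
    rw [hMbar, hMdiag]
    rw [Matrix.add_apply, Matrix.sub_apply, Matrix.diagonal_mul]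
    by_cases h : j = k
    · subst h
      rw [Matrix.one_apply_eq, Matrix.diagonal_apply_eq, if_pos rfl]
    · rw [Matrix.one_apply_ne h, Matrix.diagonal_apply_ne _ h, if_neg h]
      ring
  have hM0 : ∀ j k, 0 ≤ Mbar j k := by
    intro j k
    rw [hMentry]
    have hprod : 0 ≤ β j * xbar j * (1 - Psibar j) * W j k :=
      mul_nonneg (mul_nonneg (mul_nonneg (hβ j).1 (hxbar j).1)
        (by linarith [hPsi1 j])) (hW0 j k)
    by_cases h : j = k
    · rw [if_pos h]
      linarith [(hδ j).2]
    · rw [if_neg h]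
      linarith
  -- ## one-step comparison for a
  have hastep : ∀ t j, a (t+1) j ≤ (∑ k, Mbar j k * a t k) + q ^ t := by
    intro t j
    have hsum : ∑ k, Mbar j k * a t k
        = (1 - δ j) * a t j + β j * xbar j * (1 - Psibar j) * (∑ k, W j k * a t k) := by
      simp_rw [hMentry, add_mul, Finset.sum_add_distrib, ite_mul, zero_mul]
      rw [Finset.sum_ite_eq, if_pos (Finset.mem_univ j)]
      simp_rw [mul_assoc, Finset.mul_sum]
    rw [hrec_a, hsum]
    have hs : 0 ≤ 1 - a t j - d t j := by linarith [Had t j]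
    have h1Ψ : 0 ≤ 1 - Psibar j := by linarith [hPsi1 j]
    have h1cb : 0 ≤ 1 - cb j := by linarith [hcb_le1 j]
    have hpow : (1 - cb j) ^ t ≤ q ^ t := pow_le_pow_left₀ h1cb (hqj j) t
    have hbx : β j * xbar j ≤ 1 := mul_le_one₀ (hβ j).2 (hxbar j).1 (hxbar j).2
    set S := ∑ k, W j k * a t k with hS
    have step1 : β j * x t j * (1 - a t j - d t j) * S
        ≤ β j * xbar j * (1 - a t j - d t j) * S :=
      mul_le_mul_of_nonneg_right (mul_le_mul_of_nonneg_right
        (mul_le_mul_of_nonneg_left (hbound t j) (hβ j).1) hs) (HWa0 t j)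
    have step2 : 1 - a t j - d t j
        ≤ (1 - Psibar j) * (1 - a t j) + (1 - cb j) ^ t := by
      linarith only [hg j t]
    have step3 : β j * xbar j * (1 - a t j - d t j) * S
        ≤ β j * xbar j * ((1 - Psibar j) * (1 - a t j)) * S
          + β j * xbar j * (1 - cb j) ^ t * S := by
      have h30 : β j * xbar j * (1 - a t j - d t j) * S
          ≤ β j * xbar j * ((1 - Psibar j) * (1 - a t j) + (1 - cb j) ^ t) * S :=
        mul_le_mul_of_nonneg_right (mul_le_mul_of_nonneg_left step2
          (mul_nonneg (hβ j).1 (hxbar j).1)) (HWa0 t j)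
      linarith only [h30]
    have step4 : β j * xbar j * ((1 - Psibar j) * (1 - a t j)) * S
        ≤ β j * xbar j * (1 - Psibar j) * S := by
      linarith only [mul_nonneg (mul_nonneg (mul_nonneg (mul_nonneg (hβ j).1 (hxbar j).1) h1Ψ)
        (HWa0 t j)) (Ha t j)]
    have step5 : β j * xbar j * (1 - cb j) ^ t * S ≤ q ^ t := by
      calc β j * xbar j * (1 - cb j) ^ t * S ≤ β j * xbar j * (1 - cb j) ^ t :=
            mul_le_of_le_one_right (mul_nonneg (mul_nonneg (hβ j).1 (hxbar j).1)
              (pow_nonneg h1cb t)) (HWa1 t j)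
      _ ≤ (1 - cb j) ^ t := mul_le_of_le_one_left (pow_nonneg h1cb t) hbx
      _ ≤ q ^ t := hpow
    linarith only [step1, step3, step4, step5]
  -- ## spectral contraction of Mbar and conclusion for a
  obtain ⟨M, hM1, κ, hκ0, hκ1, hκ⟩ := exists_pow_rowsum_lt n hn Mbar heig
  have hκ' : ∀ i, ∑ j', (Mbar ^ M) i j' ≤ κ := by
    intro i
    have habs : ∑ j', |(Mbar ^ M) i j'| = ∑ j', (Mbar ^ M) i j' :=
      Finset.sum_congr rfl fun j' _ => abs_of_nonneg (pow_entry_nonneg Mbar hM0 M i j')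
    rw [← habs]
    exact hκ i
  have haj : ∀ j, Tendsto (fun t => a t j) atTop (nhds 0) :=
    matrix_iss hn Mbar hM0 M hM1 κ hκ0 hκ1 hκ' a Ha (fun t => q ^ t)
      (fun t => pow_nonneg hq0 t)
      (tendsto_pow_atTop_nhds_zero_of_lt_one hq0 hq1) hastep
  have goalA : Tendsto a atTop (nhds 0) := by
    rw [tendsto_pi_nhds]
    intro j
    simpa using haj j
  -- ## Part B : opinion convergence
  obtain ⟨k0, hk0⟩ := hstub
  have hk0' : lam k0 < 1 := by linarith [hξ k0]
  obtain ⟨M', hM'1, κ', hκ'0, hκ'1, hκ'row⟩ :=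
    substoch_contract hn lam Wt hlam (fun j => by linarith [hlamξ j, hξ j]) hWt0 hWt1
      hWtirr k0 hk0'
  set T : Matrix (Fin n) (Fin n) ℝ := Matrix.diagonal lam * Wt with hT
  have hTentry : ∀ i k, T i k = lam i * Wt i k := fun i k => by
    rw [hT, Matrix.diagonal_mul]
  have hT0 : ∀ i k, 0 ≤ T i k := fun i k => by
    rw [hTentry]; exact mul_nonneg (hlam i) (hWt0 i k)
  have hTpow0 : ∀ m i k, 0 ≤ (T ^ m) i k := pow_entry_nonneg T hT0
  have hdet : (1 - T).det ≠ 0 := by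
    intro h0
    obtain ⟨v, hv, hveq⟩ := (Matrix.exists_mulVec_eq_zero_iff).mpr h0
    have hTv : ∀ j, ∑ k, T j k * v k = v j := by
      intro j
      have h1 := congrFun hveq j
      rw [one_sub_mulVec] at h1
      have h2 : (0 : Fin n → ℝ) j = 0 := rfl
      rw [h2] at h1
      linarith
    have hiter := pow_fixed T v hTv M'
    obtain ⟨j0, hj0⟩ : ∃ j0, v j0 ≠ 0 := by
      by_contra hc
      push_neg at hc
      exact hv (funext hc)
    set uv : ℝ := Finset.univ.sup' hne (fun k => |v k|) with huv
    have huv_ge : ∀ k, |v k| ≤ uv := by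
      intro k
      rw [huv]
      exact Finset.le_sup' (fun k => |v k|) (Finset.mem_univ k)
    have huv_pos : 0 < uv := lt_of_lt_of_le (abs_pos.mpr hj0) (huv_ge j0)
    have hcontr : ∀ j, |v j| ≤ κ' * uv := by
      intro j
      rw [← hiter j]
      calc |∑ k, (T ^ M') j k * v k| ≤ ∑ k, |(T ^ M') j k * v k| :=
            Finset.abs_sum_le_sum_abs _ _
      _ = ∑ k, (T ^ M') j k * |v k| := Finset.sum_congr rfl fun k _ => by
            rw [abs_mul, abs_of_nonneg (hTpow0 M' j k)]
      _ ≤ ∑ k, (T ^ M') j k * uv := Finset.sum_le_sum fun k _ =>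
            mul_le_mul_of_nonneg_left (huv_ge k) (hTpow0 M' j k)
      _ = (∑ k, (T ^ M') j k) * uv := by rw [Finset.sum_mul]
      _ ≤ κ' * uv := mul_le_mul_of_nonneg_right (hκ'row j) huv_pos.le
    have : uv ≤ κ' * uv := by
      rw [huv]
      exact Finset.sup'_le hne _ fun k _ => hcontr k
    nlinarith [huv_pos, hκ'1]
  have hdetU : IsUnit (1 - T).det := isUnit_iff_ne_zero.mpr hdet
  have hfixv : (1 - T) *ᵥ xstar = (1 - Matrix.diagonal lam - Matrix.diagonal ξ) *ᵥ x0 := by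
    rw [hxstar, Matrix.mulVec_mulVec, ← Matrix.mul_assoc,
      Matrix.mul_nonsing_inv _ hdetU, Matrix.one_mul]
  have hfix : ∀ j, xstar j = (1 - lam j - ξ j) * x0 j + lam j * ∑ k, Wt j k * xstar k := by
    intro j
    have h1 := congrFun hfixv j
    rw [one_sub_mulVec, sub_diag_mulVec] at h1
    have h2 : ∑ k, T j k * xstar k = lam j * ∑ k, Wt j k * xstar k := by
      simp_rw [hTentry, mul_assoc]
      rw [← Finset.mul_sum]
    rw [h2] at h1
    linarith
  have hWa_tend : ∀ j, Tendsto (fun t => ∑ k, W j k * a t k) atTop (nhds 0) := by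
    intro j
    have h := tendsto_finset_sum (Finset.univ : Finset (Fin n))
      (fun k (_ : k ∈ Finset.univ) => (haj k).const_mul (W j k))
    simpa using h
  set ζx : ℕ → ℝ := fun t => ∑ j', ξ j' * ∑ k, W j' k * a t k with hζxdef
  have hζx0 : ∀ t, 0 ≤ ζx t := fun t => Finset.sum_nonneg fun j' _ =>
    mul_nonneg (hξ j') (HWa0 t j')
  have hζxt : Tendsto ζx atTop (nhds 0) := by
    rw [hζxdef]
    have h := tendsto_finset_sum (Finset.univ : Finset (Fin n))
      (fun j' (_ : j' ∈ Finset.univ) => ((hWa_tend j').const_mul (ξ j')))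
    simpa using h
  set vx : ℕ → Fin n → ℝ := fun t j => |x t j - xstar j| with hvx
  have hvxrec : ∀ t j, vx (t + 1) j ≤ (∑ k, T j k * vx t k) + ζx t := by
    intro t j
    have hdiff : x (t + 1) j - xstar j
        = lam j * (∑ k, Wt j k * (x t k - xstar k)) + ξ j * (∑ k, W j k * a t k) := by
      rw [hrec_x]
      nth_rewrite 1 [hfix j]
      simp_rw [mul_sub]
      rw [Finset.sum_sub_distrib]
      ring
    have hTsum : ∑ k, T j k * vx t k = lam j * ∑ k, Wt j k * vx t k := by
      simp_rw [hTentry, mul_assoc]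
      rw [← Finset.mul_sum]
    have habs : |x (t + 1) j - xstar j|
        ≤ lam j * (∑ k, Wt j k * vx t k) + ξ j * (∑ k, W j k * a t k) := by
      rw [hdiff]
      apply le_trans (abs_add_le _ _)
      apply add_le_add
      · rw [abs_mul, abs_of_nonneg (hlam j)]
        apply mul_le_mul_of_nonneg_left _ (hlam j)
        calc |∑ k, Wt j k * (x t k - xstar k)| ≤ ∑ k, |Wt j k * (x t k - xstar k)| :=
              Finset.abs_sum_le_sum_abs _ _
        _ = ∑ k, Wt j k * vx t k := Finset.sum_congr rfl fun k _ => by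
              rw [abs_mul, abs_of_nonneg (hWt0 j k)]
      · rw [abs_mul, abs_of_nonneg (hξ j), abs_of_nonneg (HWa0 t j)]
    have hlast : ξ j * (∑ k, W j k * a t k) ≤ ζx t := by
      rw [hζxdef]
      exact Finset.single_le_sum (f := fun j' => ξ j' * ∑ k, W j' k * a t k)
        (fun j' _ => mul_nonneg (hξ j') (HWa0 t j')) (Finset.mem_univ j)
    calc vx (t + 1) j = |x (t + 1) j - xstar j| := rfl
    _ ≤ lam j * (∑ k, Wt j k * vx t k) + ξ j * (∑ k, W j k * a t k) := habs
    _ ≤ lam j * (∑ k, Wt j k * vx t k) + ζx t := by linarith [hlast]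
    _ = (∑ k, T j k * vx t k) + ζx t := by rw [hTsum]
  have hvxj : ∀ j, Tendsto (fun t => vx t j) atTop (nhds 0) :=
    matrix_iss hn T hT0 M' hM'1 κ' hκ'0 hκ'1 hκ'row vx
      (fun t j => abs_nonneg _) ζx hζx0 hζxt hvxrec
  have hxj : ∀ j, Tendsto (fun t => x t j) atTop (nhds (xstar j)) := by
    intro j
    have h2 : Tendsto (fun t => x t j - xstar j) atTop (nhds 0) :=
      squeeze_zero_norm (fun t => le_of_eq (Real.norm_eq_abs _)) (hvxj j)
    have h3 := h2.add_const (xstar j)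
    simpa using h3
  have goalX : Tendsto x atTop (nhds xstar) := by
    rw [tendsto_pi_nhds]
    exact hxj
  -- ## Part C : defector convergence
  have hxs0 : ∀ j, 0 ≤ xstar j := fun j =>
    le_of_tendsto_of_tendsto' tendsto_const_nhds (hxj j) (fun t => Hxl t j)
  have hxs1 : ∀ j, xstar j ≤ 1 := fun j =>
    le_of_tendsto_of_tendsto' (hxj j) tendsto_const_nhds (fun t => Hxu t j)
  have hcs_pos : ∀ j, 0 < γ j * xstar j + θ j * (1 - xstar j) := by
    intro j
    have h0 := hxs0 j
    have h1 := hxs1 j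
    rcases le_total (γ j) (θ j) with h | h
    · have := mul_le_mul_of_nonneg_right h (by linarith : (0:ℝ) ≤ 1 - xstar j)
      nlinarith [hγpos j, mul_nonneg (hγpos j).le h0]
    · have := mul_le_mul_of_nonneg_right h h0
      nlinarith [hθpos j, mul_nonneg (hθpos j).le (by linarith : (0:ℝ) ≤ 1 - xstar j)]
  have hPsis_id : ∀ j, Psistar j * (γ j * xstar j + θ j * (1 - xstar j))
      = θ j * (1 - xstar j) := by
    intro j
    rw [hPsistar j]
    exact div_mul_cancel₀ _ (ne_of_gt (hcs_pos j))
  have hdj : ∀ j, Tendsto (fun t => d t j) atTop (nhds (Psistar j)) := by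
    intro j
    have hm0 : 0 < min (γ j) (θ j) := lt_min (hγpos j) (hθpos j)
    have hm1 : min (γ j) (θ j) ≤ 1 := le_trans (min_le_left _ _) (hγ j).2
    set ρ : ℝ := 1 - min (γ j) (θ j) with hρdef
    have hρ0 : 0 ≤ ρ := by rw [hρdef]; linarith
    have hρ1 : ρ < 1 := by rw [hρdef]; linarith
    set F : ℕ → ℝ := fun t => θ j * (1 - x t j) * (1 - a t j) + δ j * a t j
      - (γ j * x t j + θ j * (1 - x t j)) * Psistar j with hFdef
    have hFt : Tendsto F atTop (nhds 0) := by
      have hx' := hxj j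
      have ha' := haj j
      have h1 : Tendsto F atTop (nhds (θ j * (1 - xstar j) * (1 - 0) + δ j * 0
          - (γ j * xstar j + θ j * (1 - xstar j)) * Psistar j)) := by
        rw [hFdef]
        exact (((tendsto_const_nhds.mul (tendsto_const_nhds.sub hx')).mul
          (tendsto_const_nhds.sub ha')).add (tendsto_const_nhds.mul ha')).sub
          (((tendsto_const_nhds.mul hx').add
            (tendsto_const_nhds.mul (tendsto_const_nhds.sub hx'))).mul tendsto_const_nhds)
      have h2 : θ j * (1 - xstar j) * (1 - 0) + δ j * 0
          - (γ j * xstar j + θ j * (1 - xstar j)) * Psistar j = 0 := by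
        have := hPsis_id j
        nlinarith [this]
      rwa [h2] at h1
    have hζdt : Tendsto (fun t => |F t|) atTop (nhds 0) := by
      have := hFt.abs
      simpa using this
    have hudrec : ∀ t, |d (t + 1) j - Psistar j| ≤ ρ * |d t j - Psistar j| + |F t| := by
      intro t
      have hc1 : γ j * x t j + θ j * (1 - x t j) ≤ 1 := by
        have e1 : γ j * x t j ≤ x t j := mul_le_of_le_one_left (Hxl t j) (hγ j).2
        have e2 : θ j * (1 - x t j) ≤ 1 - x t j :=
          mul_le_of_le_one_left (by linarith [Hxu t j]) (hθ j).2
        linarith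
      have hc2 : min (γ j) (θ j) ≤ γ j * x t j + θ j * (1 - x t j) := by
        have e1 : min (γ j) (θ j) * x t j ≤ γ j * x t j :=
          mul_le_mul_of_nonneg_right (min_le_left _ _) (Hxl t j)
        have e2 : min (γ j) (θ j) * (1 - x t j) ≤ θ j * (1 - x t j) :=
          mul_le_mul_of_nonneg_right (min_le_right _ _) (by linarith [Hxu t j])
        nlinarith [e1, e2]
      have heq : d (t + 1) j - Psistar j
          = (1 - (γ j * x t j + θ j * (1 - x t j))) * (d t j - Psistar j) + F t := by
        rw [hrec_d, hFdef]
        ring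
      calc |d (t + 1) j - Psistar j|
          ≤ |(1 - (γ j * x t j + θ j * (1 - x t j))) * (d t j - Psistar j)| + |F t| := by
            rw [heq]; exact abs_add_le _ _
      _ = (1 - (γ j * x t j + θ j * (1 - x t j))) * |d t j - Psistar j| + |F t| := by
            rw [abs_mul, abs_of_nonneg (by linarith : (0:ℝ) ≤ 1 - (γ j * x t j + θ j * (1 - x t j)))]
      _ ≤ ρ * |d t j - Psistar j| + |F t| := by
            have : (1 - (γ j * x t j + θ j * (1 - x t j))) ≤ ρ := by rw [hρdef]; linarith
            have := mul_le_mul_of_nonneg_right this (abs_nonneg (d t j - Psistar j))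
            linarith
    have hud := iss_scalar (fun t => |d t j - Psistar j|) (fun t => |F t|) ρ hρ0 hρ1
      (fun t => abs_nonneg _) hudrec hζdt
    have h2 : Tendsto (fun t => d t j - Psistar j) atTop (nhds 0) :=
      squeeze_zero_norm (fun t => le_of_eq (Real.norm_eq_abs _)) hud
    have h3 := h2.add_const (Psistar j)
    simpa using h3
  have goalD : Tendsto d atTop (nhds Psistar) := by
    rw [tendsto_pi_nhds]
    exact hdj
  exact ⟨goalA, goalD, goalX⟩
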